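/- Let C ⊂ ℝⁿ be compact convex, x ∉ C, x_C the metric projection of x onto C, u_x = (x − x_C)/|x − x_C|, and h(w) = max_{z∈C}⟨z,w⟩. Set α_x = d(x,C)/(d(x,C) + diam(C)). Then ⟨x, u_x⟩ − h(u_x) = d(x,C), and for every unit vector w whose angle with u_x lies in [α_x/3, α_x/2] one has (1/2) d(x,C) ≤ ⟨x,w⟩ − h(w) ≤ d(x,C). -/

import Mathlib

open scoped RealInnerProductSpace

set_option maxHeartbeats 1000000 in
/-- Let `C ⊆ ℝⁿ` be compact convex, `x ∉ C`, `x_C` the metric projection of `x` onto `C`,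
`u = (x - x_C)/‖x - x_C‖`, `h` the support function of `C`, and
`α = d(x,C)/(d(x,C) + diam C)`. Then `⟨x,u⟩ - h(u) = d(x,C)`, and for every unit vector `w`
whose angle with `u` lies in `[α/3, α/2]` one has `d(x,C)/2 ≤ ⟨x,w⟩ - h(w) ≤ d(x,C)`. -/
theorem stmt_9 {n : ℕ} (C : Set (EuclideanSpace ℝ (Fin n))) (hCc : IsCompact C)
    (hCconv : Convex ℝ C) (hCne : C.Nonempty)
    (x xC : EuclideanSpace ℝ (Fin n)) (hx : x ∉ C) (hxC : xC ∈ C)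
    (hproj : dist x xC = Metric.infDist x C)
    (h : EuclideanSpace ℝ (Fin n) → ℝ)
    (hh : ∀ w, IsGreatest ((fun z => ⟪z, w⟫) '' C) (h w))
    (u : EuclideanSpace ℝ (Fin n)) (hu : u = ‖x - xC‖⁻¹ • (x - xC))
    (α : ℝ) (hα : α = Metric.infDist x C / (Metric.infDist x C + Metric.diam C)) :
    (⟪x, u⟫ - h u = Metric.infDist x C) ∧
    ∀ w : EuclideanSpace ℝ (Fin n), ‖w‖ = 1 →
      Real.arccos ⟪w, u⟫ ∈ Set.Icc (α / 3) (α / 2) →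
      Metric.infDist x C / 2 ≤ ⟪x, w⟫ - h w ∧ ⟪x, w⟫ - h w ≤ Metric.infDist x C := by
  have hxne : x - xC ≠ 0 := sub_ne_zero.mpr fun h' => hx (h' ▸ hxC)
  have hn0 : (0:ℝ) < ‖x - xC‖ := norm_pos_iff.mpr hxne
  have hdist : Metric.infDist x C = ‖x - xC‖ := by rw [← hproj, dist_eq_norm]
  have : Nonempty C := hCne.to_subtype
  have hiInf : ‖x - xC‖ = ⨅ w : C, ‖x - (w : EuclideanSpace ℝ (Fin n))‖ := by
    rw [← dist_eq_norm, hproj, Metric.infDist_eq_iInf]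
    simp [dist_eq_norm]
  have hkey : ∀ z ∈ C, ⟪x - xC, z - xC⟫ ≤ 0 :=
    (norm_eq_iInf_iff_real_inner_le_zero hCconv hxC).mp hiInf
  have hukey : ∀ z ∈ C, ⟪z - xC, u⟫ ≤ 0 := by
    intro z hz
    rw [hu, real_inner_smul_right]
    apply mul_nonpos_of_nonneg_of_nonpos (inv_nonneg.mpr hn0.le)
    rw [real_inner_comm]
    exact hkey z hz
  have hxu : ⟪x - xC, u⟫ = ‖x - xC‖ := by
    rw [hu, real_inner_smul_right, real_inner_self_eq_norm_sq]
    field_simp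
  have hu1 : ‖u‖ = 1 := by
    rw [hu, norm_smul, norm_inv, norm_norm, inv_mul_cancel₀ hn0.ne']
  have hhu : h u = ⟪xC, u⟫ := by
    refine le_antisymm ?_ ((hh u).2 ⟨xC, hxC, rfl⟩)
    obtain ⟨z, hz, hzeq⟩ := (hh u).1
    rw [← hzeq]
    have h1 := hukey z hz
    rw [inner_sub_left] at h1
    linarith
  have hpart1 : ⟪x, u⟫ - h u = Metric.infDist x C := by
    rw [hhu, ← inner_sub_left, hxu, hdist]
  refine ⟨hpart1, ?_⟩
  intro w hw1 hθw
  set t := ⟪w, u⟫ with ht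
  set θ := Real.arccos t with hθ
  have habs : |t| ≤ 1 := by
    have := abs_real_inner_le_norm w u
    rwa [hw1, hu1, one_mul] at this
  have hcos : Real.cos θ = t := Real.cos_arccos (neg_le_of_abs_le habs) (le_of_abs_le habs)
  have hθ0 : 0 ≤ θ := Real.arccos_nonneg _
  have hθπ : θ ≤ Real.pi := Real.arccos_le_pi _
  have hwu : ‖w - u‖ ≤ θ := by
    have hsq : ‖w - u‖ ^ 2 = 2 - 2 * t := by
      rw [norm_sub_sq_real, hw1, hu1, ← ht]; ring
    have hc2 : Real.cos θ = 2 * Real.cos (θ / 2) ^ 2 - 1 := by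
      have := Real.cos_two_mul (θ / 2)
      rwa [mul_div_cancel₀ θ (two_ne_zero)] at this
    have hsc := Real.sin_sq_add_cos_sq (θ / 2)
    have hs0 : 0 ≤ Real.sin (θ / 2) :=
      Real.sin_nonneg_of_nonneg_of_le_pi (by linarith)
        (by nlinarith [Real.pi_pos])
    have hsle : Real.sin (θ / 2) ≤ θ / 2 := Real.sin_le (by linarith)
    have h2 : ‖w - u‖ ^ 2 = (2 * Real.sin (θ / 2)) ^ 2 := by nlinarith
    have hn : 0 ≤ ‖w - u‖ := norm_nonneg _
    nlinarith
  have hdiam0 : 0 ≤ Metric.diam C := Metric.diam_nonneg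
  have hθle : θ ≤ α / 2 := hθw.2
  have hαval : α * (‖x - xC‖ + Metric.diam C) = ‖x - xC‖ := by
    rw [hα, hdist, div_mul_cancel₀]
    positivity
  constructor
  · -- lower bound
    obtain ⟨z, hz, hzeq⟩ := (hh w).1
    have hzd : ‖x - z‖ ≤ ‖x - xC‖ + Metric.diam C := by
      have h1 : ‖xC - z‖ ≤ Metric.diam C := by
        rw [← dist_eq_norm]
        exact Metric.dist_le_diam_of_mem hCc.isBounded hxC hz
      calc ‖x - z‖ = ‖(x - xC) + (xC - z)‖ := by congr 1; abel
        _ ≤ ‖x - xC‖ + ‖xC - z‖ := norm_add_le _ _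
        _ ≤ ‖x - xC‖ + Metric.diam C := by linarith
    have e1 : ⟪x, w⟫ - h w = ⟪x - z, w⟫ := by rw [← hzeq, inner_sub_left]
    have e2 : ⟪x - z, w⟫ = ⟪x - z, u⟫ + ⟪x - z, w - u⟫ := by
      rw [← inner_add_right]; congr 1; abel
    have e3 : ‖x - xC‖ ≤ ⟪x - z, u⟫ := by
      have h1 := hukey z hz
      have h2 : ⟪x - z, u⟫ = ⟪x - xC, u⟫ - ⟪z - xC, u⟫ := by
        rw [← inner_sub_left]; congr 1; abel
      rw [h2, hxu]; linarith
    have e4 : -((‖x - xC‖ + Metric.diam C) * θ) ≤ ⟪x - z, w - u⟫ := by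
      have h1 := abs_real_inner_le_norm (x - z) (w - u)
      have h2 : ‖x - z‖ * ‖w - u‖ ≤ (‖x - xC‖ + Metric.diam C) * θ := by
        apply mul_le_mul hzd hwu (norm_nonneg _) (by positivity)
      have := neg_abs_le ⟪x - z, w - u⟫
      linarith
    rw [e1, e2, hdist]
    nlinarith
  · -- upper bound
    have h1 : ⟪xC, w⟫ ≤ h w := (hh w).2 ⟨xC, hxC, rfl⟩
    have h2 := real_inner_le_norm (x - xC) w
    rw [hw1, mul_one, inner_sub_left] at h2
    rw [hdist]
    linarith
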